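/- arXiv:1011.2244 — 2 statements merged into one kernel-verified Lean document; each statement's English description precedes it below -/
import Mathlib

section
/- For every continuous ℤ^d-periodic function u : ℝ^d → ℝ and every x ∈ ℝ^d, lim_{t → +∞} T^a_t u(x) = min_{y ∈ ℝ^d} u(y) (the minimum exists by periodicity and continuity). -/
open Set Filter

noncomputable section

/-- Euclidean space `ℝ^d`. -/
abbrev Ed (d : ℕ) := EuclideanSpace ℝ (Fin d)

/-- The vector in `ℝ^d` with integer coordinates `k`. -/
def intVec (d : ℕ) (k : Fin d → ℤ) : Ed d := WithLp.toLp 2 (fun i => (k i : ℝ))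

/-- `u : ℝ^d → ℝ` is `ℤ^d`-periodic. -/
def IsZdPeriodic {d : ℕ} (u : Ed d → ℝ) : Prop :=
  ∀ (x : Ed d) (k : Fin d → ℤ), u (x + intVec d k) = u x

/-- `γ` is continuous and piecewise `C¹` on `[a, b]`. -/
def PiecewiseC1On {d : ℕ} (γ : ℝ → Ed d) (a b : ℝ) : Prop :=
  ContinuousOn γ (Set.Icc a b) ∧
  ∃ (n : ℕ) (T : Fin (n + 1) → ℝ), T 0 = a ∧ T (Fin.last n) = b ∧ Monotone T ∧
    ∀ i : Fin n, ContDiffOn ℝ 1 γ (Set.Icc (T i.castSucc) (T i.succ))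

/-- The action of the curve `γ : [a,b] → ℝ^d` for the autonomous Lagrangian `La`. -/
def actionA {d : ℕ} (La : Ed d → Ed d → ℝ) (γ : ℝ → Ed d) (a b : ℝ) : ℝ :=
  ∫ s in a..b, La (γ s) (deriv γ s)

/-- The Lax–Oleinik semigroup `Tᵃ_t u (x)`: `Tᵃ_0 u = u` and, for `t > 0`, the infimum of
`u(γ(0)) + ∫₀^t La(γ,γ') ds` over continuous piecewise `C¹` curves ending at `x`. -/
def LOa {d : ℕ} (La : Ed d → Ed d → ℝ) (u : Ed d → ℝ) (t : ℝ) (x : Ed d) : ℝ :=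
  if t = 0 then u x
  else sInf {r | ∃ γ : ℝ → Ed d, PiecewiseC1On γ 0 t ∧ γ t = x ∧
    r = u (γ 0) + actionA La γ 0 t}

/-- The new Lax–Oleinik operator `T̃ᵃ_t u (x) = inf_{σ ∈ [t,2t]} Tᵃ_σ u (x)`. -/
def LOnew {d : ℕ} (La : Ed d → Ed d → ℝ) (u : Ed d → ℝ) (t : ℝ) (x : Ed d) : ℝ :=
  sInf {r | ∃ σ : ℝ, t ≤ σ ∧ σ ≤ 2 * t ∧ r = LOa La u σ x}

/-- Auxiliary: every point of `ℝ^d` is within `√d` of an integer vector. -/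
lemma ed_floor {d : ℕ} (z : Ed d) : ∃ k : Fin d → ℤ, ‖z - intVec d k‖ ≤ Real.sqrt d := by
  refine ⟨fun i => ⌊z i⌋, ?_⟩
  rw [EuclideanSpace.norm_eq]
  apply Real.sqrt_le_sqrt
  have key : ∀ i : Fin d, ‖(z - intVec d (fun j => ⌊z j⌋)) i‖ ^ 2 ≤ 1 := by
    intro i
    have h1 : (z - intVec d (fun i => ⌊z i⌋)) i = z i - ⌊z i⌋ := by
      simp [intVec]
    rw [h1, Real.norm_eq_abs]
    have h2 := Int.fract_nonneg (z i)
    have h3 := Int.fract_lt_one (z i)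
    rw [Int.fract] at h2 h3
    rw [abs_of_nonneg h2]
    nlinarith
  calc (∑ i, ‖(z - intVec d (fun j => ⌊z j⌋)) i‖ ^ 2) ≤ ∑ _i : Fin d, (1:ℝ) :=
        Finset.sum_le_sum fun i _ => key i
    _ = d := by simp

/-- Auxiliary: straight lines are `C¹`. -/
lemma line_contDiff {d : ℕ} (y v : Ed d) : ContDiff ℝ 1 (fun s : ℝ => y + s • v) :=
  contDiff_const.add (contDiff_id.smul contDiff_const)

/-- Auxiliary: straight lines are continuous piecewise `C¹` curves. -/
lemma line_pc1 {d : ℕ} (y v : Ed d) {t : ℝ} (ht : 0 ≤ t) :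
    PiecewiseC1On (fun s : ℝ => y + s • v) 0 t := by
  refine ⟨(line_contDiff y v).continuous.continuousOn, 1, ![0, t], rfl, rfl, ?_, ?_⟩
  · intro i j hij
    fin_cases i <;> fin_cases j <;> simp_all
  · intro i
    exact (line_contDiff y v).contDiffOn

/-- Auxiliary: the derivative of a straight line. -/
lemma line_deriv {d : ℕ} (y v : Ed d) (s : ℝ) :
    deriv (fun s : ℝ => y + s • v) s = v := by
  have h : HasDerivAt (fun s : ℝ => y + s • v) v s := by
    simpa using ((hasDerivAt_id s).smul_const v).const_add y
  exact h.deriv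

/-- Auxiliary: a function cubically small near `0` vanishes at `0` together with
its derivative. -/
lemma cube_deriv_zero {d : ℕ} (g : Ed d → ℝ) (C₀ δ₀ : ℝ) (hC₀ : 0 < C₀) (hδ₀ : 0 < δ₀)
    (hg : ∀ w : Ed d, ‖w‖ ≤ δ₀ → |g w| ≤ C₀ * ‖w‖ ^ 3) :
    g 0 = 0 ∧ HasFDerivAt g (0 : Ed d →L[ℝ] ℝ) 0 := by
  have hg0 : g 0 = 0 := by
    have h := hg 0 (by simp [hδ₀.le])
    simp only [norm_zero] at h
    have : |g 0| ≤ 0 := by nlinarith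
    exact abs_eq_zero.mp (le_antisymm this (abs_nonneg _))
  refine ⟨hg0, ?_⟩
  rw [hasFDerivAt_iff_isLittleO_nhds_zero]
  simp only [zero_add, hg0, sub_zero, ContinuousLinearMap.zero_apply]
  rw [Asymptotics.isLittleO_iff]
  intro c hc
  rw [Metric.eventually_nhds_iff]
  refine ⟨min δ₀ (Real.sqrt (c / C₀)), by positivity, ?_⟩
  intro w hw
  rw [dist_zero_right] at hw
  have h1 : ‖w‖ ≤ δ₀ := le_trans hw.le (min_le_left _ _)
  have h2 : ‖w‖ ≤ Real.sqrt (c / C₀) := le_trans hw.le (min_le_right _ _)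
  have h3 : ‖w‖ ^ 2 ≤ c / C₀ := by
    have hs := Real.sq_sqrt (by positivity : (0:ℝ) ≤ c / C₀)
    nlinarith [norm_nonneg w, Real.sqrt_nonneg (c / C₀)]
  have h4 := hg w h1
  rw [Real.norm_eq_abs]
  have h5 : C₀ * (c / C₀) = c := mul_div_cancel₀ c hC₀.ne'
  calc |g w| ≤ C₀ * ‖w‖ ^ 3 := h4
    _ ≤ c * ‖w‖ := by nlinarith [norm_nonneg w, mul_le_mul_of_nonneg_right h3 (norm_nonneg w),
        mul_le_mul_of_nonneg_left (mul_le_mul_of_nonneg_right h3 (norm_nonneg w)) hC₀.le]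

/-- Auxiliary: the Lagrangian `L¹ₐ` is nonnegative (its minimum in `v` is `0`, at `v = ω`). -/
lemma L1_nonneg {d : ℕ} (ω : Ed d) (A : Ed d → Ed d →L[ℝ] Ed d)
    (f : Ed d → Ed d → ℝ) (hf : ContDiff ℝ 2 (fun p : Ed d × Ed d => f p.1 p.2))
    (C₀ δ₀ : ℝ) (hC₀ : 0 < C₀) (hδ₀ : 0 < δ₀)
    (hfcube : ∀ x w : Ed d, ‖w‖ ≤ δ₀ → |f x w| ≤ C₀ * ‖w‖ ^ 3)
    (L1 : Ed d → Ed d → ℝ)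
    (hL1 : ∀ x v : Ed d,
      L1 x v = (1 / 2 : ℝ) * (inner ℝ (A x (v - ω)) (v - ω) : ℝ) + f x (v - ω))
    (hpos : ∀ x v w : Ed d, w ≠ 0 →
      0 < iteratedFDeriv ℝ 2 (fun v' => L1 x v') v ![w, w])
    (x v : Ed d) : 0 ≤ L1 x v := by
  have hcube := cube_deriv_zero (fun w => f x w) C₀ δ₀ hC₀ hδ₀ (fun w hw => hfcube x w hw)
  have hfx0 : f x 0 = 0 := hcube.1
  set F : Ed d → ℝ := fun v' => L1 x v' with hF
  have hFeq : F = fun v' => (1/2 : ℝ) * (inner ℝ (A x (v' - ω)) (v' - ω) : ℝ) + f x (v' - ω) :=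
    funext fun v' => hL1 x v'
  have hsub : ContDiff ℝ 2 fun v' : Ed d => v' - ω := contDiff_id.sub contDiff_const
  have hq2 : ContDiff ℝ 2 fun v' : Ed d => (inner ℝ (A x (v' - ω)) (v' - ω) : ℝ) :=
    ContDiff.inner ℝ (((A x).contDiff).comp hsub) hsub
  have hfx2 : ContDiff ℝ 2 fun v' : Ed d => f x (v' - ω) :=
    hf.comp (contDiff_const.prodMk hsub)
  have hFC2 : ContDiff ℝ 2 F := by rw [hFeq]; exact (contDiff_const.mul hq2).add hfx2
  have hFω : F ω = 0 := by rw [hFeq]; simp [hfx0]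
  have hd2 : HasFDerivAt (fun v' : Ed d => v' - ω) (ContinuousLinearMap.id ℝ (Ed d)) ω :=
    (hasFDerivAt_id ω).sub_const ω
  have hd1 : HasFDerivAt (fun v' : Ed d => A x (v' - ω)) (A x) ω := by
    have h : HasFDerivAt (⇑(A x) ∘ fun v' : Ed d => v' - ω)
        ((A x).comp (ContinuousLinearMap.id ℝ (Ed d))) ω := (A x).hasFDerivAt.comp ω hd2
    rw [ContinuousLinearMap.comp_id] at h
    exact h
  have hq0 : HasFDerivAt (fun v' : Ed d => (inner ℝ (A x (v' - ω)) (v' - ω) : ℝ))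
      (0 : Ed d →L[ℝ] ℝ) ω := by
    have h := hd1.inner ℝ hd2
    refine h.congr_fderiv ?_
    ext z
    simp [fderivInnerCLM_apply]
  have hfd0 : HasFDerivAt (fun w : Ed d => f x w) (0 : Ed d →L[ℝ] ℝ) (ω - ω) := by
    simpa using hcube.2
  have hfd' : HasFDerivAt (fun v' : Ed d => f x (v' - ω)) (0 : Ed d →L[ℝ] ℝ) ω := by
    have h : HasFDerivAt ((fun w : Ed d => f x w) ∘ fun v' : Ed d => v' - ω)
        ((0 : Ed d →L[ℝ] ℝ).comp (ContinuousLinearMap.id ℝ (Ed d))) ω :=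
      HasFDerivAt.comp ω hfd0 hd2
    simpa [Function.comp_def] using h
  have hFd : HasFDerivAt F (0 : Ed d →L[ℝ] ℝ) ω := by
    rw [hFeq]
    refine ((hq0.const_mul (1/2 : ℝ)).add hfd').congr_fderiv ?_
    simp
  rcases eq_or_ne v ω with hv | hv
  · rw [hv]; exact le_of_eq hFω.symm
  have hw : v - ω ≠ 0 := sub_ne_zero.mpr hv
  set w : Ed d := v - ω with hwdef
  set c : ℝ → Ed d := fun s => ω + s • w with hc
  have hcder : ∀ s : ℝ, HasDerivAt c w s := fun s => by
    simpa [hc] using ((hasDerivAt_id s).smul_const w).const_add ω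
  have hFdiff : Differentiable ℝ F := hFC2.differentiable (by norm_num)
  set Φ : Ed d → (Ed d →L[ℝ] ℝ) := fderiv ℝ F with hΦ
  have hΦdiff : Differentiable ℝ Φ := (hFC2.fderiv_right (m := 1) (by norm_num)).differentiable (by norm_num)
  have hgder : ∀ s : ℝ, HasDerivAt (fun s' => F (c s')) (Φ (c s) w) s := fun s =>
    ((hFdiff (c s)).hasFDerivAt).comp_hasDerivAt s (hcder s)
  have hg''pos : ∀ s : ℝ, 0 < (fderiv ℝ Φ (c s) w) w := fun s => by
    have h := hpos x (c s) w hw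
    rw [iteratedFDeriv_two_apply] at h
    simpa using h
  have hg'der : ∀ s : ℝ, HasDerivAt (fun s' => Φ (c s') w) ((fderiv ℝ Φ (c s) w) w) s := fun s => by
    have h1 : HasDerivAt (fun s' => Φ (c s')) (fderiv ℝ Φ (c s) w) s :=
      ((hΦdiff (c s)).hasFDerivAt).comp_hasDerivAt s (hcder s)
    simpa using h1.clm_apply (hasDerivAt_const s w)
  have hg'mono : StrictMono (fun s => Φ (c s) w) :=
    strictMono_of_deriv_pos fun s => by rw [(hg'der s).deriv]; exact hg''pos s
  have hc0 : c 0 = ω := by simp [hc]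
  have hg'0 : Φ (c 0) w = 0 := by rw [hc0, hΦ, hFd.fderiv]; simp
  obtain ⟨s, hs, hslope⟩ := exists_hasDerivAt_eq_slope (fun s' => F (c s')) (fun s' => Φ (c s') w)
      (by norm_num : (0:ℝ) < 1)
      (continuous_iff_continuousAt.mpr fun s => (hgder s).continuousAt).continuousOn
      (fun s _ => hgder s)
  have hpos' : (0:ℝ) < Φ (c s) w := by
    rw [← hg'0]; exact hg'mono hs.1
  have hc1 : c 1 = v := by rw [hc]; simp [hwdef]
  rw [hc1, hc0, hFω] at hslope
  have hfin : 0 < F v := by rw [← sub_zero (F v)]; nlinarith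
  exact hfin.le

set_option maxHeartbeats 1200000 in
/-- for the Lagrangian `L¹ₐ`, `Tᵃ_t u (x) → min u` as `t → +∞`. -/
theorem LOa_tendsto_min
    {d : ℕ} (hd : 1 ≤ d) (ω : Ed d) (hω : ‖ω‖ = 1)
    (A : Ed d → Ed d →L[ℝ] Ed d) (hA : ContDiff ℝ 2 A)
    (hAper : ∀ (x : Ed d) (k : Fin d → ℤ), A (x + intVec d k) = A x)
    (hAsymm : ∀ x v w : Ed d, (inner ℝ (A x v) w : ℝ) = (inner ℝ v (A x w) : ℝ))
    (f : Ed d → Ed d → ℝ) (hf : ContDiff ℝ 2 (fun p : Ed d × Ed d => f p.1 p.2))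
    (hfper : ∀ (x w : Ed d) (k : Fin d → ℤ), f (x + intVec d k) w = f x w)
    (C₀ δ₀ : ℝ) (hC₀ : 0 < C₀) (hδ₀ : 0 < δ₀)
    (hfcube : ∀ x w : Ed d, ‖w‖ ≤ δ₀ → |f x w| ≤ C₀ * ‖w‖ ^ 3)
    (L1 : Ed d → Ed d → ℝ)
    (hL1 : ∀ x v : Ed d,
      L1 x v = (1 / 2 : ℝ) * (inner ℝ (A x (v - ω)) (v - ω) : ℝ) + f x (v - ω))
    (hpos : ∀ x v w : Ed d, w ≠ 0 →
      0 < iteratedFDeriv ℝ 2 (fun v' => L1 x v') v ![w, w])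
    (hsl : ∀ A₀ : ℝ, 0 ≤ A₀ → ∃ B : ℝ, ∀ x v : Ed d, A₀ * ‖v‖ - B ≤ L1 x v)
    (u : Ed d → ℝ) (hu : Continuous u) (huper : IsZdPeriodic u)
    (x : Ed d) :
    Filter.Tendsto (fun t : ℝ => LOa L1 u t x) Filter.atTop (nhds (⨅ y : Ed d, u y)) := by
  classical
  set R : ℝ := Real.sqrt d with hRdef
  have hRnn : (0:ℝ) ≤ R := Real.sqrt_nonneg d
  have hRpos : (0:ℝ) < R := Real.sqrt_pos.mpr (by exact_mod_cast Nat.pos_of_ne_zero (by omega))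
  set K : Set (Ed d) := Metric.closedBall (0 : Ed d) R with hKdef
  have hKc : IsCompact K := isCompact_closedBall _ _
  have hKne : K.Nonempty := ⟨0, Metric.mem_closedBall_self hRnn⟩
  -- the minimum of u
  obtain ⟨y₀, hy₀K, hy₀min⟩ := hKc.exists_isMinOn hKne hu.continuousOn
  have hmin : ∀ z : Ed d, u y₀ ≤ u z := by
    intro z
    obtain ⟨k, hk⟩ := ed_floor z
    have hz : u z = u (z - intVec d k) := by
      have h := huper (z - intVec d k) k
      rw [sub_add_cancel] at h
      exact h
    rw [hz]
    exact hy₀min (by simpa [hKdef, Metric.mem_closedBall, dist_zero_right] using hk)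
  have hm : (⨅ y : Ed d, u y) = u y₀ :=
    le_antisymm (ciInf_le ⟨u y₀, by rintro r ⟨z, rfl⟩; exact hmin z⟩ y₀) (le_ciInf hmin)
  -- the bound on A
  obtain ⟨z₀, hz₀K, hz₀max⟩ := hKc.exists_isMaxOn hKne (hA.continuous.norm.continuousOn)
  set M : ℝ := ‖A z₀‖ with hMdef
  have hMnn : 0 ≤ M := norm_nonneg _
  have hAbd : ∀ z : Ed d, ‖A z‖ ≤ M := by
    intro z
    obtain ⟨k, hk⟩ := ed_floor z
    have hz : A z = A (z - intVec d k) := by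
      have h := hAper (z - intVec d k) k
      rw [sub_add_cancel] at h
      exact h
    rw [hz]
    exact hz₀max (by simpa [hKdef, Metric.mem_closedBall, dist_zero_right] using hk)
  -- basic facts about L1
  have hL1nn : ∀ z v' : Ed d, 0 ≤ L1 z v' :=
    L1_nonneg ω A f hf C₀ δ₀ hC₀ hδ₀ hfcube L1 hL1 hpos
  have hL1ub : ∀ z v' : Ed d, ‖v' - ω‖ ≤ δ₀ →
      L1 z v' ≤ M / 2 * ‖v' - ω‖ ^ 2 + C₀ * ‖v' - ω‖ ^ 3 := by
    intro z v' hv'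
    rw [hL1]
    have h1 : (inner ℝ (A z (v' - ω)) (v' - ω) : ℝ) ≤ M * ‖v' - ω‖ ^ 2 := by
      calc (inner ℝ (A z (v' - ω)) (v' - ω) : ℝ) ≤ ‖A z (v' - ω)‖ * ‖v' - ω‖ :=
            real_inner_le_norm _ _
        _ ≤ (M * ‖v' - ω‖) * ‖v' - ω‖ := by
            refine mul_le_mul_of_nonneg_right ?_ (norm_nonneg _)
            calc ‖A z (v' - ω)‖ ≤ ‖A z‖ * ‖v' - ω‖ := (A z).le_opNorm _
              _ ≤ M * ‖v' - ω‖ := mul_le_mul_of_nonneg_right (hAbd z) (norm_nonneg _)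
        _ = M * ‖v' - ω‖ ^ 2 := by ring
    have h2 : f z (v' - ω) ≤ C₀ * ‖v' - ω‖ ^ 3 := (abs_le.mp (hfcube z _ hv')).2
    linarith
  -- lower bound for members of the defining set
  have hSlb : ∀ t : ℝ, 0 < t → ∀ r ∈ {r | ∃ γ : ℝ → Ed d, PiecewiseC1On γ 0 t ∧ γ t = x ∧
      r = u (γ 0) + actionA L1 γ 0 t}, u y₀ ≤ r := by
    rintro t ht r ⟨γ, hγ, hγt, rfl⟩
    have hact : (0:ℝ) ≤ actionA L1 γ 0 t :=
      intervalIntegral.integral_nonneg ht.le fun s _ => hL1nn _ _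
    have h := hmin (γ 0)
    linarith
  -- nonemptiness of the defining set
  have hSne : ∀ t : ℝ, 0 < t → ∃ r, r ∈ {r | ∃ γ : ℝ → Ed d, PiecewiseC1On γ 0 t ∧ γ t = x ∧
      r = u (γ 0) + actionA L1 γ 0 t} := by
    intro t ht
    refine ⟨_, ⟨fun s => (x - t • ω) + s • ω, line_pc1 _ _ ht.le, by simp, rfl⟩⟩
  rw [hm]
  set K' : ℝ := M / 2 * R ^ 2 + C₀ * R ^ 3 with hK'def
  have hK'nn : 0 ≤ K' := by positivity
  set t₀ : ℝ := max 1 (R / δ₀) with ht₀def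
  have ht₀1 : (1:ℝ) ≤ t₀ := le_max_left _ _
  -- squeeze
  have hupper : Tendsto (fun t : ℝ => u y₀ + K' / t) atTop (nhds (u y₀)) := by
    have h1 : Tendsto (fun t : ℝ => K' / t) atTop (nhds 0) := by
      simpa [div_eq_mul_inv] using tendsto_inv_atTop_zero.const_mul K'
    simpa using tendsto_const_nhds.add h1
  refine tendsto_of_tendsto_of_tendsto_of_le_of_le' (tendsto_const_nhds (x := u y₀)) hupper ?_ ?_
  · -- eventual lower bound
    filter_upwards [eventually_gt_atTop (0:ℝ)] with t ht
    rw [LOa, if_neg ht.ne']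
    exact le_csInf (hSne t ht) (hSlb t ht)
  · -- eventual upper bound
    filter_upwards [eventually_ge_atTop t₀] with t htt
    have ht1 : (1:ℝ) ≤ t := le_trans ht₀1 htt
    have ht0 : (0:ℝ) < t := lt_of_lt_of_le one_pos ht1
    obtain ⟨k, hk⟩ := ed_floor (x - t • ω - y₀)
    set y : Ed d := y₀ + intVec d k with hydef
    have huy : u y = u y₀ := huper y₀ k
    set v : Ed d := t⁻¹ • (x - y) with hvdef
    set γ : ℝ → Ed d := fun s => y + s • v with hγdef
    have hγt : γ t = x := by
      rw [hγdef]
      simp only [hvdef, smul_smul, mul_inv_cancel₀ ht0.ne', one_smul]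
      abel
    have hγ0 : γ 0 = y := by simp [hγdef]
    have hvω : v - ω = t⁻¹ • (x - t • ω - y₀ - intVec d k) := by
      have h3 : x - t • ω - y₀ - intVec d k = (x - y) - t • ω := by rw [hydef]; abel
      rw [h3, smul_sub, smul_smul, inv_mul_cancel₀ ht0.ne', one_smul, hvdef]
    have hnorm : ‖v - ω‖ ≤ R / t := by
      rw [hvω, norm_smul, norm_inv, Real.norm_eq_abs, abs_of_pos ht0]
      rw [div_eq_inv_mul]
      exact mul_le_mul_of_nonneg_left hk (by positivity)
    have hδ : ‖v - ω‖ ≤ δ₀ := by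
      refine le_trans hnorm ?_
      rw [div_le_iff₀ ht0]
      have h4 : R / δ₀ ≤ t := le_trans (le_max_right _ _) htt
      rw [div_le_iff₀ hδ₀] at h4
      nlinarith
    -- the action of the straight line
    have hderiv : (fun s => L1 (γ s) (deriv γ s)) = fun s => L1 (γ s) v := by
      funext s
      rw [hγdef, line_deriv]
    have hcontline : Continuous fun s : ℝ => L1 (γ s) v := by
      have hcz : Continuous fun z : Ed d => L1 z v := by
        have heq : (fun z : Ed d => L1 z v) =
            fun z => (1 / 2 : ℝ) * (inner ℝ (A z (v - ω)) (v - ω) : ℝ) + f z (v - ω) :=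
          funext fun z => hL1 z v
        rw [heq]
        have hc1 : Continuous fun z : Ed d => A z (v - ω) :=
          (ContinuousLinearMap.apply ℝ (Ed d) (v - ω)).continuous.comp hA.continuous
        have hc2 : Continuous fun z : Ed d => f z (v - ω) :=
          hf.continuous.comp (continuous_id.prodMk continuous_const)
        exact (continuous_const.mul (hc1.inner continuous_const)).add hc2
      exact hcz.comp (line_contDiff y v).continuous
    set b : ℝ := M / 2 * ‖v - ω‖ ^ 2 + C₀ * ‖v - ω‖ ^ 3 with hbdef
    have hactle : actionA L1 γ 0 t ≤ t * b := by
      have h5 : actionA L1 γ 0 t = ∫ s in (0:ℝ)..t, L1 (γ s) v := by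
        rw [actionA, hderiv]
      rw [h5]
      calc (∫ s in (0:ℝ)..t, L1 (γ s) v) ≤ ∫ _s in (0:ℝ)..t, b := by
            refine intervalIntegral.integral_mono_on ht0.le
              (hcontline.intervalIntegrable 0 t) (intervalIntegrable_const) ?_
            intro s _
            exact hL1ub (γ s) v hδ
        _ = t * b := by rw [intervalIntegral.integral_const, smul_eq_mul, sub_zero]
    have htb : t * b ≤ K' / t := by
      have h6 : ‖v - ω‖ ^ 2 ≤ (R / t) ^ 2 := pow_le_pow_left₀ (norm_nonneg _) hnorm 2
      have h7 : ‖v - ω‖ ^ 3 ≤ (R / t) ^ 3 := pow_le_pow_left₀ (norm_nonneg _) hnorm 3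
      have h8 : b ≤ M / 2 * (R / t) ^ 2 + C₀ * (R / t) ^ 3 := by
        rw [hbdef]
        have := mul_le_mul_of_nonneg_left h6 (by positivity : (0:ℝ) ≤ M / 2)
        have := mul_le_mul_of_nonneg_left h7 hC₀.le
        linarith
      have h9 : t * (M / 2 * (R / t) ^ 2 + C₀ * (R / t) ^ 3) ≤ K' / t := by
        calc t * (M / 2 * (R / t) ^ 2 + C₀ * (R / t) ^ 3)
            = M / 2 * R ^ 2 / t + C₀ * R ^ 3 / t ^ 2 := by field_simp
          _ ≤ M / 2 * R ^ 2 / t + C₀ * R ^ 3 / t := by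
              have hdd : C₀ * R ^ 3 / t ^ 2 ≤ C₀ * R ^ 3 / t :=
                div_le_div_of_nonneg_left (by positivity) ht0 (by nlinarith)
              linarith
          _ = K' / t := by rw [hK'def, add_div]
      calc t * b ≤ t * (M / 2 * (R / t) ^ 2 + C₀ * (R / t) ^ 3) :=
            mul_le_mul_of_nonneg_left h8 ht0.le
        _ ≤ K' / t := h9
    -- conclude
    rw [LOa, if_neg ht0.ne']
    have hmem : u (γ 0) + actionA L1 γ 0 t ∈ {r | ∃ γ' : ℝ → Ed d, PiecewiseC1On γ' 0 t ∧
        γ' t = x ∧ r = u (γ' 0) + actionA L1 γ' 0 t} :=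
      ⟨γ, line_pc1 _ _ ht0.le, hγt, rfl⟩
    have hbdd : BddBelow {r | ∃ γ' : ℝ → Ed d, PiecewiseC1On γ' 0 t ∧
        γ' t = x ∧ r = u (γ' 0) + actionA L1 γ' 0 t} := ⟨u y₀, hSlb t ht0⟩
    calc sInf _ ≤ u (γ 0) + actionA L1 γ 0 t := csInf_le hbdd hmem
      _ ≤ u y₀ + K' / t := by
          rw [hγ0, huy]
          have := le_trans hactle htb
          linarith
end
end

section
/- There exist a continuous ℤ^d-periodic function u : ℝ^d → ℝ with min_{y ∈ ℝ^d} u(y) = 0, a point x⁰ ∈ ℝ^d, a constant c > 0, and a sequence t_m → +∞ such that T^a_{t_m} u(x⁰) ≥ c / t_m for every m. (Hence, since T^a_t u converges to 0, the O(1/t) convergence rate of the Lax–Oleinik semigroup for this class of Lagrangians is sharp in the sense of order.) -/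
open Set Filter

noncomputable section

section Aux

open MeasureTheory intervalIntegral RealInnerProductSpace Metric

variable {d : ℕ}

/-- On a C¹ piece, integrability of `F ∘ deriv γ`. -/
lemma piece_II {a b : ℝ} (hab : a < b) {γ : ℝ → Ed d}
    (hγ : ContDiffOn ℝ 1 γ (Icc a b)) {F : Ed d → ℝ} (hF : Continuous F) :
    IntervalIntegrable (fun s => F (deriv γ s)) MeasureTheory.volume a b := by
  have hud : UniqueDiffOn ℝ (Icc a b) := uniqueDiffOn_Icc hab
  set g := derivWithin γ (Icc a b) with hg
  have hgc : ContinuousOn g (Icc a b) := hγ.continuousOn_derivWithin hud le_rfl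
  have heq : EqOn (fun s => F (g s)) (fun s => F (deriv γ s)) (Ioo a b) := by
    intro x hx
    have hmem : Icc a b ∈ nhds x := Icc_mem_nhds hx.1 hx.2
    simp only [hg, derivWithin_of_mem_nhds hmem]
  have hInt : MeasureTheory.IntegrableOn (fun s => F (g s)) (Ioo a b) MeasureTheory.volume := by
    have hc : ContinuousOn (fun s => F (g s)) (Icc a b) := hF.comp_continuousOn hgc
    exact (hc.integrableOn_compact isCompact_Icc).mono_set Ioo_subset_Icc_self
  rw [intervalIntegrable_iff_integrableOn_Ioo_of_le hab.le]
  exact hInt.congr_fun heq measurableSet_Ioo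

/-- Per-piece key inequality. -/
lemma piece_key (ω w : Ed d) {a b : ℝ} (hab : a ≤ b) {γ : ℝ → Ed d}
    (hγ : ContDiffOn ℝ 1 γ (Icc a b)) :
    IntervalIntegrable (fun s => (1/2 : ℝ) * ‖deriv γ s - ω‖ ^ 2) MeasureTheory.volume a b ∧
    ⟪w, γ b⟫ - ⟪w, γ a⟫ - (b - a) * (⟪w, ω⟫ + (1/2) * ‖w‖ ^ 2) ≤
      ∫ s in a..b, (1/2 : ℝ) * ‖deriv γ s - ω‖ ^ 2 := by
  rcases eq_or_lt_of_le hab with rfl | hab'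
  · refine ⟨IntervalIntegrable.refl, ?_⟩
    simp
  have hF1 : Continuous fun v : Ed d => (1/2 : ℝ) * ‖v - ω‖ ^ 2 :=
    continuous_const.mul (((continuous_id.sub continuous_const).norm).pow 2)
  have hF2 : Continuous fun v : Ed d => (⟪w, v⟫ : ℝ) := by
    exact continuous_const.inner continuous_id
  have hI1 := piece_II hab' hγ hF1
  have hI2 := piece_II hab' hγ hF2
  refine ⟨hI1, ?_⟩
  -- FTC for ψ s = ⟪w, γ s⟫
  have hFTC : ∫ s in a..b, (⟪w, deriv γ s⟫ : ℝ) = ⟪w, γ b⟫ - ⟪w, γ a⟫ := by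
    apply integral_eq_sub_of_hasDeriv_right_of_le hab
      (hF2.comp_continuousOn hγ.continuousOn) ?_ hI2
    intro x hx
    have hmem : Icc a b ∈ nhds x := Icc_mem_nhds hx.1 hx.2
    have hdiff : DifferentiableAt ℝ γ x :=
      ((hγ.differentiableOn one_ne_zero) x (Ioo_subset_Icc_self hx)).differentiableAt hmem
    have hd : HasDerivAt γ (deriv γ x) x := hdiff.hasDerivAt
    have : HasDerivAt (fun s => (⟪w, γ s⟫ : ℝ)) (⟪w, deriv γ x⟫) x := by
      simpa using (hasDerivAt_const x w).inner ℝ hd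
    exact this.hasDerivWithinAt
  have hle : ∀ x ∈ Icc a b, (⟪w, deriv γ x⟫ : ℝ) - (⟪w, ω⟫ + (1/2) * ‖w‖ ^ 2) ≤
      (1/2 : ℝ) * ‖deriv γ x - ω‖ ^ 2 := by
    intro x _
    have h0 : (0:ℝ) ≤ (1/2) * ‖(deriv γ x - ω) - w‖ ^ 2 := by positivity
    have hexp := norm_sub_sq_real (deriv γ x - ω) w
    have hcomm : (⟪deriv γ x - ω, w⟫ : ℝ) = ⟪w, deriv γ x - ω⟫ := real_inner_comm w _
    have hsubr : (⟪w, deriv γ x - ω⟫ : ℝ) = ⟪w, deriv γ x⟫ - ⟪w, ω⟫ := inner_sub_right w _ _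
    nlinarith [h0, hexp, hcomm, hsubr]
  have hpint : IntervalIntegrable
      (fun s => (⟪w, deriv γ s⟫ : ℝ) - (⟪w, ω⟫ + (1/2) * ‖w‖ ^ 2)) MeasureTheory.volume a b :=
    hI2.sub intervalIntegrable_const
  have hmono := integral_mono_on hab hpint hI1 hle
  have hsub : ∫ s in a..b, ((⟪w, deriv γ s⟫ : ℝ) - (⟪w, ω⟫ + (1/2) * ‖w‖ ^ 2)) =
      (⟪w, γ b⟫ - ⟪w, γ a⟫) - (b - a) * (⟪w, ω⟫ + (1/2) * ‖w‖ ^ 2) := by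
    rw [intervalIntegral.integral_sub hI2 intervalIntegrable_const, hFTC,
      intervalIntegral.integral_const, smul_eq_mul]
  linarith [hmono, hsub ▸ hmono]

/-- Lower bound for the action of a piecewise C¹ curve. -/
lemma action_lower (ω w : Ed d) {t : ℝ} {γ : ℝ → Ed d}
    (hc : ContinuousOn γ (Icc 0 t))
    (n : ℕ) (T : Fin (n + 1) → ℝ) (hT0 : T 0 = 0) (hTl : T (Fin.last n) = t)
    (hmono : Monotone T)
    (hp : ∀ i : Fin n, ContDiffOn ℝ 1 γ (Icc (T i.castSucc) (T i.succ))) :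
    ⟪w, γ t - γ 0 - t • ω⟫ - t / 2 * ‖w‖ ^ 2 ≤
      ∫ s in (0:ℝ)..t, (1/2 : ℝ) * ‖deriv γ s - ω‖ ^ 2 := by
  set a : ℕ → ℝ := fun k => T ⟨min k n, Nat.lt_succ_of_le (min_le_right _ _)⟩ with ha
  have ha0 : a 0 = 0 := by
    have : (⟨min 0 n, Nat.lt_succ_of_le (min_le_right _ _)⟩ : Fin (n+1)) = 0 := by
      ext; simp
    rw [ha]; simp only [this]; exact hT0
  have han : a n = t := by
    have : (⟨min n n, Nat.lt_succ_of_le (min_le_right _ _)⟩ : Fin (n+1)) = Fin.last n := by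
      ext; simp [Fin.last]
    rw [ha]; simp only [this]; exact hTl
  have hak : ∀ k (hk : k < n), a k = T (Fin.castSucc ⟨k, hk⟩) ∧ a (k+1) = T (Fin.succ ⟨k, hk⟩) := by
    intro k hk
    constructor
    · have : (⟨min k n, Nat.lt_succ_of_le (min_le_right _ _)⟩ : Fin (n+1)) = Fin.castSucc ⟨k, hk⟩ := by
        ext; simp [Nat.le_of_lt hk, min_eq_left]
      rw [ha]; simp only [this]
    · have : (⟨min (k+1) n, Nat.lt_succ_of_le (min_le_right _ _)⟩ : Fin (n+1)) = Fin.succ ⟨k, hk⟩ := by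
        ext; simp [Nat.succ_le_of_lt hk, min_eq_left]
      rw [ha]; simp only [this]
  have hkey : ∀ k (hk : k < n),
      IntervalIntegrable (fun s => (1/2 : ℝ) * ‖deriv γ s - ω‖ ^ 2) MeasureTheory.volume
        (a k) (a (k+1)) ∧
      ⟪w, γ (a (k+1))⟫ - ⟪w, γ (a k)⟫ - (a (k+1) - a k) * (⟪w, ω⟫ + (1/2) * ‖w‖ ^ 2) ≤
        ∫ s in (a k)..(a (k+1)), (1/2 : ℝ) * ‖deriv γ s - ω‖ ^ 2 := by
    intro k hk
    obtain ⟨h1, h2⟩ := hak k hk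
    have hle : a k ≤ a (k+1) := by
      rw [h1, h2]; exact hmono (Fin.castSucc_le_succ _)
    have := piece_key ω w hle (by rw [h1, h2]; exact hp ⟨k, hk⟩)
    exact this
  have hint : ∀ k, k < n → IntervalIntegrable (fun s => (1/2 : ℝ) * ‖deriv γ s - ω‖ ^ 2)
      MeasureTheory.volume (a k) (a (k+1)) := fun k hk => (hkey k hk).1
  have hsum := intervalIntegral.sum_integral_adjacent_intervals hint
  rw [ha0, han] at hsum
  have hineqsum : ∑ k ∈ Finset.range n,
      (⟪w, γ (a (k+1))⟫ - ⟪w, γ (a k)⟫ - (a (k+1) - a k) * (⟪w, ω⟫ + (1/2) * ‖w‖ ^ 2)) ≤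
      ∑ k ∈ Finset.range n, ∫ s in (a k)..(a (k+1)), (1/2 : ℝ) * ‖deriv γ s - ω‖ ^ 2 :=
    Finset.sum_le_sum fun k hk => (hkey k (Finset.mem_range.mp hk)).2
  have htel1 : ∑ k ∈ Finset.range n, ((⟪w, γ (a (k+1))⟫ : ℝ) - ⟪w, γ (a k)⟫) =
      ⟪w, γ (a n)⟫ - ⟪w, γ (a 0)⟫ := Finset.sum_range_sub (fun k => (⟪w, γ (a k)⟫ : ℝ)) n
  have htel2 : ∑ k ∈ Finset.range n, (a (k+1) - a k) = a n - a 0 :=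
    Finset.sum_range_sub a n
  have hsplit : ∑ k ∈ Finset.range n,
      ((⟪w, γ (a (k+1))⟫ : ℝ) - ⟪w, γ (a k)⟫ - (a (k+1) - a k) * (⟪w, ω⟫ + (1/2) * ‖w‖ ^ 2)) =
      (⟪w, γ (a n)⟫ - ⟪w, γ (a 0)⟫) - (a n - a 0) * (⟪w, ω⟫ + (1/2) * ‖w‖ ^ 2) := by
    rw [Finset.sum_sub_distrib, ← Finset.sum_mul, htel1, htel2]
  rw [hsplit, ha0, han] at hineqsum
  rw [hsum] at hineqsum
  have hexp : (⟪w, γ t - γ 0 - t • ω⟫ : ℝ) - t / 2 * ‖w‖ ^ 2 =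
      (⟪w, γ t⟫ - ⟪w, γ 0⟫) - (t - 0) * (⟪w, ω⟫ + (1/2) * ‖w‖ ^ 2) := by
    rw [inner_sub_right, inner_sub_right, real_inner_smul_right]; ring
  rw [hexp]
  exact hineqsum

/-- The Jensen-type lower bound for the action. -/
lemma action_sq_lower (ω : Ed d) {t : ℝ} (ht : 0 < t) {γ : ℝ → Ed d}
    (hc : ContinuousOn γ (Icc 0 t))
    (n : ℕ) (T : Fin (n + 1) → ℝ) (hT0 : T 0 = 0) (hTl : T (Fin.last n) = t)
    (hmono : Monotone T)
    (hp : ∀ i : Fin n, ContDiffOn ℝ 1 γ (Icc (T i.castSucc) (T i.succ))) :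
    ‖γ t - γ 0 - t • ω‖ ^ 2 / (2 * t) ≤
      ∫ s in (0:ℝ)..t, (1/2 : ℝ) * ‖deriv γ s - ω‖ ^ 2 := by
  set z := γ t - γ 0 - t • ω with hz
  have h := action_lower ω (t⁻¹ • z) hc n T hT0 hTl hmono hp
  have h1 : (⟪t⁻¹ • z, z⟫ : ℝ) = t⁻¹ * ‖z‖ ^ 2 := by
    rw [real_inner_smul_left, real_inner_self_eq_norm_sq]
  have h2 : ‖t⁻¹ • z‖ ^ 2 = t⁻¹ ^ 2 * ‖z‖ ^ 2 := by
    rw [norm_smul, mul_pow, Real.norm_eq_abs, sq_abs]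
  rw [← hz, h1, h2] at h
  have hts : t ≠ 0 := ne_of_gt ht
  have heq : t⁻¹ * ‖z‖ ^ 2 - t / 2 * (t⁻¹ ^ 2 * ‖z‖ ^ 2) = ‖z‖ ^ 2 / (2 * t) := by
    field_simp; ring
  linarith [heq ▸ h]

lemma intVec_add (p q : Fin d → ℤ) : intVec d (p + q) = intVec d p + intVec d q := by
  ext i; simp [intVec, PiLp.add_apply]

lemma intVec_zero : intVec d 0 = 0 := by
  ext i; simp [intVec]

lemma lat_mem_zero : (0 : Ed d) ∈ Set.range (intVec d) := ⟨0, intVec_zero⟩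

lemma lat_image (k : Fin d → ℤ) :
    (fun y => y + intVec d k) '' Set.range (intVec d) = Set.range (intVec d) := by
  ext y
  constructor
  · rintro ⟨_, ⟨p, rfl⟩, rfl⟩
    exact ⟨p + k, by rw [intVec_add]⟩
  · rintro ⟨p, rfl⟩
    refine ⟨intVec d (p - k), ⟨p - k, rfl⟩, ?_⟩
    show intVec d (p - k) + intVec d k = intVec d p
    rw [← intVec_add]; congr 1; ring

lemma infDist_periodic (x : Ed d) (k : Fin d → ℤ) :
    infDist (x + intVec d k) (Set.range (intVec d)) = infDist x (Set.range (intVec d)) := by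
  have hiso : Isometry (fun y : Ed d => y + intVec d k) := Isometry.of_dist_eq fun a b => by
    simp [dist_eq_norm]
  have h := infDist_image (t := Set.range (intVec d)) (x := x) hiso
  rw [lat_image] at h
  exact h

lemma lat_sep {p q : Fin d → ℤ} (h : p ≠ q) :
    1 ≤ dist (intVec d p) (intVec d q) := by
  obtain ⟨i, hi⟩ := Function.ne_iff.mp h
  have h1 : (1 : ℝ) ≤ |((p i : ℝ)) - (q i : ℝ)| := by
    have h' : (1 : ℤ) ≤ |p i - q i| := Int.one_le_abs (sub_ne_zero.mpr hi)
    exact_mod_cast h'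
  have h2 : dist ((intVec d p) i) ((intVec d q) i) ≤ dist (intVec d p) (intVec d q) := by
    rw [EuclideanSpace.dist_eq]
    have hterm : dist ((intVec d p) i) ((intVec d q) i) ^ 2 ≤
        ∑ j, dist ((intVec d p) j) ((intVec d q) j) ^ 2 :=
      Finset.single_le_sum (f := fun j => dist ((intVec d p) j) ((intVec d q) j) ^ 2)
        (fun j _ => sq_nonneg _) (Finset.mem_univ i)
    calc dist ((intVec d p) i) ((intVec d q) i)
        = Real.sqrt (dist ((intVec d p) i) ((intVec d q) i) ^ 2) := by
          rw [Real.sqrt_sq dist_nonneg]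
      _ ≤ _ := Real.sqrt_le_sqrt hterm
  have h3 : dist ((intVec d p) i) ((intVec d q) i) = |((p i : ℝ)) - (q i : ℝ)| := by
    simp [intVec, Real.dist_eq]
  linarith [h1, h2, h3 ▸ h2]

lemma lat_dichotomy (ω : Ed d) (hω : ‖ω‖ = 1) (t : ℝ) :
    1/8 ≤ infDist (-(t • ω)) (Set.range (intVec d)) ∨
    1/8 ≤ infDist (-((t + 1/2) • ω)) (Set.range (intVec d)) := by
  by_contra h
  push_neg at h
  obtain ⟨h1, h2⟩ := h
  have hne : (Set.range (intVec d)).Nonempty := ⟨0, lat_mem_zero⟩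
  obtain ⟨k, ⟨p, rfl⟩, hk⟩ := (infDist_lt_iff hne).mp h1
  obtain ⟨k', ⟨q, rfl⟩, hk'⟩ := (infDist_lt_iff hne).mp h2
  have hcc : dist (-(t • ω)) (-((t + 1/2) • ω)) = 1/2 := by
    rw [dist_eq_norm]
    have : -(t • ω) - -((t + 1/2) • ω) = (1/2 : ℝ) • ω := by module
    rw [this, norm_smul, hω, Real.norm_eq_abs]
    norm_num
  by_cases hpq : p = q
  · subst hpq
    have := dist_triangle (-(t • ω)) (intVec d p) (-((t + 1/2) • ω))
    rw [dist_comm (intVec d p)] at this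
    linarith [hcc ▸ this]
  · have hsep := lat_sep hpq
    have h3 := dist_triangle (intVec d p) (-(t • ω)) (intVec d q)
    have h4 := dist_triangle (-(t • ω)) (-((t + 1/2) • ω)) (intVec d q)
    rw [dist_comm (intVec d p) (-(t • ω))] at h3
    have e1 := dist_comm (intVec d q) (-((t + 1/2) • ω))
    linarith


/-- for the integrable Lagrangian `L̄(x,v) = ½‖v − ω‖²` there are a
continuous `ℤ^d`-periodic `u` with `min u = 0`, a point `x⁰`, a constant `c > 0` and
times `t_m → +∞` with `Tᵃ_{t_m} u (x⁰) ≥ c / t_m`: the `O(1/t)` rate is sharp. -/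
theorem LOa_rate_sharp
    {d : ℕ} (hd : 1 ≤ d) (ω : Ed d) (hω : ‖ω‖ = 1) :
    ∃ u : Ed d → ℝ, Continuous u ∧ IsZdPeriodic u ∧
      (∀ y : Ed d, 0 ≤ u y) ∧ (∃ y : Ed d, u y = 0) ∧
      ∃ (x0 : Ed d) (c : ℝ), 0 < c ∧ ∃ tm : ℕ → ℝ,
        Filter.Tendsto tm Filter.atTop Filter.atTop ∧
        ∀ m : ℕ, c / tm m ≤
          LOa (fun _x v => (1 / 2 : ℝ) * ‖v - ω‖ ^ 2) u (tm m) x0 := by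
  classical
  set L := Set.range (intVec d) with hL
  refine ⟨fun x => infDist x L, continuous_infDist_pt L, fun x k => infDist_periodic x k,
    fun y => infDist_nonneg, ⟨0, infDist_zero_of_mem lat_mem_zero⟩,
    0, 1/512, by norm_num, ?_⟩
  set tm : ℕ → ℝ := fun m =>
    if 1/8 ≤ infDist (-((((m:ℝ))+1) • ω)) L then (m:ℝ)+1 else (m:ℝ)+3/2 with htm
  have htm_ge : ∀ m : ℕ, (m:ℝ)+1 ≤ tm m := by
    intro m; simp only [htm]; split_ifs <;> linarith
  have htm_D : ∀ m : ℕ, 1/8 ≤ infDist (-(tm m • ω)) L := by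
    intro m
    simp only [htm]
    split_ifs with hh
    · exact hh
    · rcases lat_dichotomy ω hω ((m:ℝ)+1) with h | h
      · exact absurd h hh
      · have : ((m:ℝ)+1) + 1/2 = (m:ℝ) + 3/2 := by ring
        rwa [this] at h
  clear htm
  clear_value tm
  refine ⟨tm, ?_, ?_⟩
  · apply Filter.tendsto_atTop_mono htm_ge
    apply Filter.tendsto_atTop_add_const_right
    exact tendsto_natCast_atTop_atTop
  · intro m
    set t := tm m with htdef
    have ht1 : 1 ≤ t := le_trans (by linarith [Nat.cast_nonneg (α := ℝ) m]) (htm_ge m)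
    have ht0 : 0 < t := lt_of_lt_of_le zero_lt_one ht1
    have htne : t ≠ 0 := ne_of_gt ht0
    rw [LOa, if_neg htne]
    apply le_csInf
    · -- nonempty: the constant curve at 0
      refine ⟨_, (fun _ => (0:Ed d)), ⟨continuousOn_const, 1, ![0, t], by simp, rfl,
        ?_, fun i => contDiffOn_const⟩, rfl, rfl⟩
      intro i j hij
      fin_cases i <;> fin_cases j <;> simp_all <;> linarith [ht0]
    · rintro r ⟨γ, ⟨hcont, n, T, hT0, hTl, hmono, hpc⟩, hγt, rfl⟩
      have hA := action_sq_lower ω ht0 hcont n T hT0 hTl hmono hpc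
      set p := γ 0 with hpdef
      have hz : γ t - γ 0 - t • ω = -(p + t • ω) := by
        rw [hγt, hpdef]; module
      rw [hz, norm_neg] at hA
      have hAA : actionA (fun _x v => (1/2 : ℝ) * ‖v - ω‖ ^ 2) γ 0 t =
          ∫ s in (0:ℝ)..t, (1/2 : ℝ) * ‖deriv γ s - ω‖ ^ 2 := rfl
      set sN := ‖p + t • ω‖ with hsN
      have hA2 : sN ^ 2 / (2 * t) ≤ actionA (fun _x v => (1/2 : ℝ) * ‖v - ω‖ ^ 2) γ 0 t := by
        rw [hAA]; exact hA
      have hup_low : infDist (-(t • ω)) L - sN ≤ infDist p L := by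
        have h := infDist_le_infDist_add_dist (s := L) (x := -(t • ω)) (y := p)
        have hd2 : dist (-(t • ω)) p = sN := by
          rw [dist_eq_norm, hsN, ← norm_neg]
          congr 1
          module
        linarith
      have hD := htm_D m
      have hup0 : (0:ℝ) ≤ infDist p L := infDist_nonneg
      show (1:ℝ)/512 / t ≤ infDist p L + actionA (fun _x v => (1/2 : ℝ) * ‖v - ω‖ ^ 2) γ 0 t
      by_cases hs : sN ≤ 1/16
      · have hup : 1/16 ≤ infDist p L := by
          rw [← htdef] at hD; linarith
        have hApos : (0:ℝ) ≤ actionA (fun _x v => (1/2 : ℝ) * ‖v - ω‖ ^ 2) γ 0 t :=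
          le_trans (by positivity) hA2
        have hct : (1:ℝ)/512 / t ≤ 1/512 := by
          rw [div_le_iff₀ ht0]; nlinarith
        linarith
      · push_neg at hs
        have hct : (1:ℝ)/512 / t ≤ sN ^ 2 / (2 * t) := by
          rw [div_le_div_iff₀ ht0 (by linarith : (0:ℝ) < 2*t)]
          nlinarith [ht0, hs, sq_nonneg (sN - 1/16)]
        linarith

end Aux
end
end
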